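/- Let H be a trace-normalised Hamiltonian on (0,∞) with d(H,t) = det M(t)/(m₁(t)m₂(t)), and define the rotation angle φ_H(t) ∈ [0,π) and ζ_H(t) = e^{2iφ_H(t)}. Let 0 ≤ φ₀ < ψ₀ ≤ π, I₁ = ζ_H^{-1}(arc from −φ₀ to φ₀), I₂ = ζ_H^{-1}(arc from ψ₀ to 2π−ψ₀). Then for all t > 0: d(H,t) ≥ sin²((ψ₀−φ₀)/2) · (1/t)λ(I₁ ∩ (0,t)) · (1/t)λ(I₂ ∩ (0,t)). -/

import Mathlib

open MeasureTheory Set Real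

/-- Rotation angle `φ_H(t) ∈ [0,π)` of a Hamiltonian `[[h₁,h₃],[h₃,h₂]]`;
`arccot x = π/2 − arctan x` (valued in `(0,π)` on the relevant range). -/
noncomputable def phiH (h₁ h₂ h₃ : ℝ → ℝ) (s : ℝ) : ℝ :=
  if h₂ s ≠ 0 then
    (if 0 ≤ h₃ s then π / 2 - Real.arctan (Real.sqrt (h₁ s / h₂ s))
      else π - (π / 2 - Real.arctan (Real.sqrt (h₁ s / h₂ s))))
  else 0

/-- Rotation `ζ_H(t) = e^{2iφ_H(t)}`. -/
noncomputable def zetaH (h₁ h₂ h₃ : ℝ → ℝ) (s : ℝ) : ℂ :=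
  Complex.exp (((2 * phiH h₁ h₂ h₃ s : ℝ) : ℂ) * Complex.I)

/-- The arc `A[α,β] = {e^{iθ} : α ≤ θ ≤ β}` of the unit circle. -/
def arcSet (α β : ℝ) : Set ℂ :=
  {z | ∃ θ ∈ Set.Icc α β, z = Complex.exp ((θ : ℂ) * Complex.I)}

/-- `d(H,t) = det M(t) / (m₁(t) m₂(t))`. -/
noncomputable def dH (h₁ h₂ h₃ : ℝ → ℝ) (t : ℝ) : ℝ :=
  ((∫ s in Ioo 0 t, h₁ s) * (∫ s in Ioo 0 t, h₂ s) - (∫ s in Ioo 0 t, h₃ s) ^ 2) /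
    ((∫ s in Ioo 0 t, h₁ s) * (∫ s in Ioo 0 t, h₂ s))

lemma phiH_mem (h₁ h₂ h₃ : ℝ → ℝ) (s : ℝ) : phiH h₁ h₂ h₃ s ∈ Ico 0 π := by
  unfold phiH
  have h1 : 0 ≤ Real.arctan (Real.sqrt (h₁ s / h₂ s)) := by
    have := Real.arctan_strictMono.monotone (Real.sqrt_nonneg (h₁ s / h₂ s))
    rwa [Real.arctan_zero] at this
  have h2 : Real.arctan (Real.sqrt (h₁ s / h₂ s)) < π / 2 := Real.arctan_lt_pi_div_two _
  have hp := Real.pi_pos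
  split_ifs <;> constructor <;> nlinarith

lemma sin_sq_phiH (h₁ h₂ h₃ : ℝ → ℝ) {s : ℝ} (H1 : 0 ≤ h₁ s) (H2 : 0 ≤ h₂ s)
    (Hsum : h₁ s + h₂ s = 1) : Real.sin (phiH h₁ h₂ h₃ s) ^ 2 = h₂ s := by
  unfold phiH
  by_cases hz : h₂ s = 0
  · simp [hz]
  · have hd : 0 ≤ h₁ s / h₂ s := div_nonneg H1 H2
    have key : Real.sin (π / 2 - Real.arctan (Real.sqrt (h₁ s / h₂ s))) ^ 2 = h₂ s := by
      rw [Real.sin_pi_div_two_sub, Real.cos_arctan, Real.sq_sqrt hd, div_pow, one_pow,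
        Real.sq_sqrt (by positivity : (0:ℝ) ≤ 1 + h₁ s / h₂ s)]
      field_simp
      linarith
    simp only [hz, ne_eq, not_false_eq_true, if_true]
    split_ifs
    · exact key
    · rw [Real.sin_pi_sub]; exact key

lemma exp_mul_I_inj {x y : ℝ} (h : Complex.exp ((x:ℂ)*Complex.I) = Complex.exp ((y:ℂ)*Complex.I)) :
    ∃ n : ℤ, x = y + n * (2*π) := by
  rw [Complex.exp_eq_exp_iff_exists_int] at h
  obtain ⟨n, hn⟩ := h
  refine ⟨n, ?_⟩
  have := congrArg Complex.im hn
  simpa using this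

lemma sin_le_of_mem_arc1 {φ₀ : ℝ} (h0 : 0 ≤ φ₀) (hπ' : φ₀ ≤ π) {φ : ℝ} (hφ : φ ∈ Ico 0 π)
    (h : Complex.exp (((2*φ : ℝ):ℂ) * Complex.I) ∈ arcSet (-φ₀) φ₀) :
    Real.sin φ ≤ Real.sin (φ₀/2) := by
  obtain ⟨θ, hθ, heq⟩ := h
  obtain ⟨n, hn⟩ := exp_mul_I_inj heq
  obtain ⟨hφ0, hφπ⟩ := hφ
  obtain ⟨hθ1, hθ2⟩ := hθ
  have hp := Real.pi_pos
  have l1 : (-1:ℝ) < (n:ℝ) := by nlinarith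
  have l2 : ((n:ℝ)) < 2 := by nlinarith
  have l1' : (-1:ℤ) < n := by exact_mod_cast l1
  have l2' : (n:ℤ) < 2 := by exact_mod_cast l2
  interval_cases n
  · push_cast at hn
    exact Real.sin_le_sin_of_le_of_le_pi_div_two (by linarith) (by linarith) (by linarith)
  · push_cast at hn
    rw [← Real.sin_pi_sub]
    exact Real.sin_le_sin_of_le_of_le_pi_div_two (by linarith) (by linarith) (by linarith)

lemma sin_ge_of_mem_arc2 {ψ₀ : ℝ} (h0 : 0 < ψ₀) (hπ' : ψ₀ ≤ π) {φ : ℝ} (hφ : φ ∈ Ico 0 π)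
    (h : Complex.exp (((2*φ : ℝ):ℂ) * Complex.I) ∈ arcSet ψ₀ (2*π - ψ₀)) :
    Real.sin (ψ₀/2) ≤ Real.sin φ := by
  obtain ⟨θ, hθ, heq⟩ := h
  obtain ⟨n, hn⟩ := exp_mul_I_inj heq
  obtain ⟨hφ0, hφπ⟩ := hφ
  obtain ⟨hθ1, hθ2⟩ := hθ
  have hp := Real.pi_pos
  have l1 : (-1:ℝ) < (n:ℝ) := by nlinarith
  have l2 : ((n:ℝ)) < 1 := by nlinarith
  have l1' : (-1:ℤ) < n := by exact_mod_cast l1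
  have l2' : (n:ℤ) < 1 := by exact_mod_cast l2
  interval_cases n
  push_cast at hn
  by_cases hc : φ ≤ π/2
  · exact Real.sin_le_sin_of_le_of_le_pi_div_two (by linarith) (by linarith) (by linarith)
  · rw [← Real.sin_pi_sub φ]
    exact Real.sin_le_sin_of_le_of_le_pi_div_two (by linarith) (by linarith) (by linarith)

lemma measurable_phiH {h₁ h₂ h₃ : ℝ → ℝ} (hm1 : Measurable h₁) (hm2 : Measurable h₂)
    (hm3 : Measurable h₃) : Measurable (phiH h₁ h₂ h₃) := by
  unfold phiH
  have hb : Measurable (fun s => Real.arctan (Real.sqrt (h₁ s / h₂ s))) :=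
    Real.continuous_arctan.measurable.comp
      (Real.continuous_sqrt.measurable.comp (hm1.div hm2))
  have hs1 : MeasurableSet {s | h₂ s ≠ 0} :=
    (hm2 (measurableSet_singleton 0)).compl
  have hs2 : MeasurableSet {s | 0 ≤ h₃ s} := hm3 measurableSet_Ici
  exact Measurable.ite hs1
    (Measurable.ite hs2 (measurable_const.sub hb) (measurable_const.sub (measurable_const.sub hb)))
    measurable_const

lemma measurable_zetaH {h₁ h₂ h₃ : ℝ → ℝ} (hm1 : Measurable h₁) (hm2 : Measurable h₂)
    (hm3 : Measurable h₃) : Measurable (zetaH h₁ h₂ h₃) := by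
  unfold zetaH
  exact Complex.continuous_exp.measurable.comp
    ((Complex.measurable_ofReal.comp ((measurable_phiH hm1 hm2 hm3).const_mul 2)).mul
      measurable_const)

lemma measurableSet_arcSet (α β : ℝ) : MeasurableSet (arcSet α β) := by
  have : arcSet α β = (fun θ : ℝ => Complex.exp ((θ:ℂ) * Complex.I)) '' Icc α β := by
    ext z
    simp only [arcSet, mem_setOf_eq, mem_image]
    constructor
    · rintro ⟨θ, hθ, rfl⟩; exact ⟨θ, hθ, rfl⟩
    · rintro ⟨θ, hθ, rfl⟩; exact ⟨θ, hθ, rfl⟩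
  rw [this]
  exact (isCompact_Icc.image
    (Complex.continuous_exp.comp (Complex.continuous_ofReal.mul continuous_const))).measurableSet

lemma ae_fst_prod {α β : Type*} [MeasurableSpace α] [MeasurableSpace β] {μ : Measure α}
    {ν : Measure β} [SFinite ν] {Q : α → Prop} (h : ∀ᵐ s ∂μ, Q s) :
    ∀ᵐ p ∂(μ.prod ν), Q p.1 := by
  rw [Filter.eventually_iff, mem_ae_iff] at h ⊢
  apply measure_mono_null (by rintro ⟨a, b⟩ hab; exact ⟨hab, mem_univ b⟩ :
    {p : α × β | Q p.1}ᶜ ⊆ ({s | Q s}ᶜ) ×ˢ (univ : Set β))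
  rw [Measure.prod_prod, h, zero_mul]

lemma ae_snd_prod {α β : Type*} [MeasurableSpace α] [MeasurableSpace β] {μ : Measure α}
    {ν : Measure β} [SFinite μ] [SFinite ν] {Q : β → Prop} (h : ∀ᵐ s ∂ν, Q s) :
    ∀ᵐ p ∂(μ.prod ν), Q p.2 := by
  rw [Filter.eventually_iff, mem_ae_iff] at h ⊢
  apply measure_mono_null (by rintro ⟨a, b⟩ hab; exact ⟨mem_univ a, hab⟩ :
    {p : α × β | Q p.2}ᶜ ⊆ (univ : Set α) ×ˢ ({s | Q s}ᶜ))
  rw [Measure.prod_prod, h, mul_zero]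

set_option maxHeartbeats 2000000 in
/-- For `0 ≤ φ₀ < ψ₀ ≤ π`, with `I₁ = ζ_H⁻¹(A[−φ₀,φ₀])` and `I₂ = ζ_H⁻¹(A[ψ₀,2π−ψ₀])`:
`d(H,t) ≥ sin²((ψ₀−φ₀)/2) · (1/t)λ(I₁∩(0,t)) · (1/t)λ(I₂∩(0,t))`. -/
theorem stmt10 (h₁ h₂ h₃ : ℝ → ℝ)
    (hmeas : Measurable h₁ ∧ Measurable h₂ ∧ Measurable h₃)
    (hae : ∀ᵐ s ∂(volume.restrict (Ioi (0:ℝ))),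
      0 ≤ h₁ s ∧ 0 ≤ h₂ s ∧ h₃ s ^ 2 ≤ h₁ s * h₂ s ∧ h₁ s + h₂ s = 1)
    (hm : ∀ t > (0:ℝ), (0 < ∫ s in Ioo 0 t, h₁ s) ∧ (0 < ∫ s in Ioo 0 t, h₂ s))
    (φ₀ ψ₀ : ℝ) (h0 : 0 ≤ φ₀) (hlt : φ₀ < ψ₀) (hπ : ψ₀ ≤ π) :
    ∀ t > (0:ℝ),
      Real.sin ((ψ₀ - φ₀) / 2) ^ 2 *
        (1 / t * (volume (zetaH h₁ h₂ h₃ ⁻¹' arcSet (-φ₀) φ₀ ∩ Ioo 0 t)).toReal) *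
        (1 / t * (volume (zetaH h₁ h₂ h₃ ⁻¹' arcSet ψ₀ (2 * π - ψ₀) ∩ Ioo 0 t)).toReal) ≤
      dH h₁ h₂ h₃ t := by
  obtain ⟨hm1, hm2, hm3⟩ := hmeas
  have hp := Real.pi_pos
  intro t ht
  set μ : Measure ℝ := volume.restrict (Ioo 0 t) with hμdef
  haveI : IsFiniteMeasure μ := by
    constructor
    rw [hμdef, Measure.restrict_apply_univ]
    simp [Real.volume_Ioo]
  have haeμ : ∀ᵐ s ∂μ, 0 ≤ h₁ s ∧ 0 ≤ h₂ s ∧ h₃ s ^ 2 ≤ h₁ s * h₂ s ∧ h₁ s + h₂ s = 1 :=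
    ae_restrict_of_ae_restrict_of_subset Ioo_subset_Ioi_self hae
  set f : ℝ → ℝ := fun s => Real.sqrt (h₁ s) with hfdef
  set g : ℝ → ℝ := fun s => Real.sqrt (h₂ s) with hgdef
  have hfm : Measurable f := Real.continuous_sqrt.measurable.comp hm1
  have hgm : Measurable g := Real.continuous_sqrt.measurable.comp hm2
  have ibound : ∀ (F : ℝ → ℝ), Measurable F → (∀ᵐ s ∂μ, ‖F s‖ ≤ 1) → Integrable F μ :=
    fun F hF hb => (integrable_const 1).mono' hF.aestronglyMeasurable hb
  have if2 : Integrable (fun s => f s ^ 2) μ := by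
    apply ibound _ (hfm.pow_const 2)
    filter_upwards [haeμ] with s hs
    rw [Real.norm_eq_abs, abs_of_nonneg (sq_nonneg _), hfdef]
    simp only
    rw [Real.sq_sqrt hs.1]
    linarith [hs.2.1, hs.2.2.2]
  have ig2 : Integrable (fun s => g s ^ 2) μ := by
    apply ibound _ (hgm.pow_const 2)
    filter_upwards [haeμ] with s hs
    rw [Real.norm_eq_abs, abs_of_nonneg (sq_nonneg _), hgdef]
    simp only
    rw [Real.sq_sqrt hs.2.1]
    linarith [hs.1, hs.2.2.2]
  have ifg : Integrable (fun s => f s * g s) μ := by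
    apply ibound _ (hfm.mul hgm)
    filter_upwards [haeμ] with s hs
    rw [Real.norm_eq_abs, Pi.mul_apply, abs_of_nonneg (mul_nonneg (Real.sqrt_nonneg _) (Real.sqrt_nonneg _))]
    have e1 : f s ≤ 1 := by
      rw [hfdef]; simp only
      rw [show (1:ℝ) = Real.sqrt 1 by rw [Real.sqrt_one]]
      exact Real.sqrt_le_sqrt (by linarith [hs.2.1, hs.2.2.2])
    have e2 : g s ≤ 1 := by
      rw [hgdef]; simp only
      rw [show (1:ℝ) = Real.sqrt 1 by rw [Real.sqrt_one]]
      exact Real.sqrt_le_sqrt (by linarith [hs.1, hs.2.2.2])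
    nlinarith [Real.sqrt_nonneg (h₁ s), Real.sqrt_nonneg (h₂ s)]
  have ih1 : Integrable h₁ μ := by
    apply ibound _ hm1
    filter_upwards [haeμ] with s hs
    rw [Real.norm_eq_abs, abs_of_nonneg hs.1]
    linarith [hs.2.1, hs.2.2.2]
  have ih2 : Integrable h₂ μ := by
    apply ibound _ hm2
    filter_upwards [haeμ] with s hs
    rw [Real.norm_eq_abs, abs_of_nonneg hs.2.1]
    linarith [hs.1, hs.2.2.2]
  have ih3 : Integrable h₃ μ := by
    apply ibound _ hm3
    filter_upwards [haeμ] with s hs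
    rw [Real.norm_eq_abs, ← Real.sqrt_sq_eq_abs]
    rw [show (1:ℝ) = Real.sqrt 1 by rw [Real.sqrt_one]]
    exact Real.sqrt_le_sqrt (by nlinarith [hs.1, hs.2.1, hs.2.2.1, hs.2.2.2])
  -- the sets
  set A : Set ℝ := zetaH h₁ h₂ h₃ ⁻¹' arcSet (-φ₀) φ₀ ∩ Ioo 0 t with hAdef
  set B : Set ℝ := zetaH h₁ h₂ h₃ ⁻¹' arcSet ψ₀ (2*π - ψ₀) ∩ Ioo 0 t with hBdef
  have hAm : MeasurableSet A :=
    ((measurable_zetaH hm1 hm2 hm3) (measurableSet_arcSet _ _)).inter measurableSet_Ioo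
  have hBm : MeasurableSet B :=
    ((measurable_zetaH hm1 hm2 hm3) (measurableSet_arcSet _ _)).inter measurableSet_Ioo
  have hμA : μ A = volume A := by
    rw [hμdef, Measure.restrict_apply hAm, inter_eq_self_of_subset_left (inter_subset_right)]
  have hμB : μ B = volume B := by
    rw [hμdef, Measure.restrict_apply hBm, inter_eq_self_of_subset_left (inter_subset_right)]
  -- trig constants
  have hsφ0 : 0 ≤ Real.sin (φ₀/2) :=
    Real.sin_nonneg_of_nonneg_of_le_pi (by linarith) (by linarith)
  have hsψ0 : 0 ≤ Real.sin (ψ₀/2) :=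
    Real.sin_nonneg_of_nonneg_of_le_pi (by linarith) (by linarith)
  have hcφ0 : 0 ≤ Real.cos (φ₀/2) :=
    Real.cos_nonneg_of_mem_Icc ⟨by linarith, by linarith⟩
  have hcψ0 : 0 ≤ Real.cos (ψ₀/2) :=
    Real.cos_nonneg_of_mem_Icc ⟨by linarith, by linarith⟩
  -- key pointwise bounds
  have keyA : ∀ᵐ s ∂μ, s ∈ A → (g s ≤ Real.sin (φ₀/2) ∧ Real.cos (φ₀/2) ≤ f s) := by
    filter_upwards [haeμ] with s hs hsA
    obtain ⟨e1, e2, e3, e4⟩ := hs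
    have hφmem := phiH_mem h₁ h₂ h₃ s
    have hsin2 : Real.sin (phiH h₁ h₂ h₃ s) ^ 2 = h₂ s := sin_sq_phiH h₁ h₂ h₃ e1 e2 e4
    have hsn : 0 ≤ Real.sin (phiH h₁ h₂ h₃ s) :=
      Real.sin_nonneg_of_nonneg_of_le_pi hφmem.1 hφmem.2.le
    have harc : Complex.exp (((2 * phiH h₁ h₂ h₃ s : ℝ):ℂ) * Complex.I) ∈ arcSet (-φ₀) φ₀ :=
      hsA.1
    have hle := sin_le_of_mem_arc1 h0 (le_trans hlt.le hπ) hφmem harc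
    have hg : g s = Real.sin (phiH h₁ h₂ h₃ s) := by
      rw [hgdef]; simp only
      rw [← hsin2, Real.sqrt_sq hsn]
    constructor
    · rw [hg]; exact hle
    · have hh2 : h₂ s ≤ Real.sin (φ₀/2) ^ 2 := by
        rw [← hsin2]; exact pow_le_pow_left₀ hsn hle 2
      have : Real.cos (φ₀/2) = Real.sqrt (1 - Real.sin (φ₀/2) ^ 2) := by
        rw [← Real.cos_sq', Real.sqrt_sq hcφ0]
      rw [this, hfdef]; simp only
      exact Real.sqrt_le_sqrt (by linarith)
  have keyB : ∀ᵐ s ∂μ, s ∈ B → (Real.sin (ψ₀/2) ≤ g s ∧ f s ≤ Real.cos (ψ₀/2)) := by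
    filter_upwards [haeμ] with s hs hsB
    obtain ⟨e1, e2, e3, e4⟩ := hs
    have hφmem := phiH_mem h₁ h₂ h₃ s
    have hsin2 : Real.sin (phiH h₁ h₂ h₃ s) ^ 2 = h₂ s := sin_sq_phiH h₁ h₂ h₃ e1 e2 e4
    have hsn : 0 ≤ Real.sin (phiH h₁ h₂ h₃ s) :=
      Real.sin_nonneg_of_nonneg_of_le_pi hφmem.1 hφmem.2.le
    have harc : Complex.exp (((2 * phiH h₁ h₂ h₃ s : ℝ):ℂ) * Complex.I) ∈ arcSet ψ₀ (2*π - ψ₀) :=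
      hsB.1
    have hle := sin_ge_of_mem_arc2 (lt_of_le_of_lt h0 hlt) hπ hφmem harc
    have hg : g s = Real.sin (phiH h₁ h₂ h₃ s) := by
      rw [hgdef]; simp only
      rw [← hsin2, Real.sqrt_sq hsn]
    constructor
    · rw [hg]; exact hle
    · have hh2 : Real.sin (ψ₀/2) ^ 2 ≤ h₂ s := by
        rw [← hsin2]; exact pow_le_pow_left₀ hsψ0 hle 2
      have hcos : Real.cos (ψ₀/2) = Real.sqrt (1 - Real.sin (ψ₀/2) ^ 2) := by
        rw [← Real.cos_sq', Real.sqrt_sq hcψ0]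
      rw [hcos, hfdef]; simp only
      exact Real.sqrt_le_sqrt (by linarith)
  -- Fubini setup
  set F : ℝ × ℝ → ℝ := fun p => (f p.1 * g p.2 - f p.2 * g p.1) ^ 2 with hFdef
  have hFeq : F = fun p : ℝ × ℝ =>
      (fun s => f s ^ 2) p.1 * (fun s => g s ^ 2) p.2 +
      (fun s => g s ^ 2) p.1 * (fun s => f s ^ 2) p.2 -
      2 * ((fun s => f s * g s) p.1 * (fun s => f s * g s) p.2) := by
    funext p; rw [hFdef]; ring
  have hFi : Integrable F (μ.prod μ) := by
    rw [hFeq]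
    exact ((if2.mul_prod ig2).add (ig2.mul_prod if2)).sub ((ifg.mul_prod ifg).const_mul 2)
  have i1 : Integrable (fun p : ℝ × ℝ => f p.1 ^ 2 * g p.2 ^ 2) (μ.prod μ) := if2.mul_prod ig2
  have i2 : Integrable (fun p : ℝ × ℝ => g p.1 ^ 2 * f p.2 ^ 2) (μ.prod μ) := ig2.mul_prod if2
  have i3 : Integrable (fun p : ℝ × ℝ => (f p.1 * g p.1) * (f p.2 * g p.2)) (μ.prod μ) :=
    ifg.mul_prod ifg
  have hD : ∫ p, F p ∂(μ.prod μ) =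
      2 * ((∫ s, f s ^ 2 ∂μ) * (∫ s, g s ^ 2 ∂μ) - (∫ s, f s * g s ∂μ) ^ 2) := by
    have e0 : ∫ p, F p ∂(μ.prod μ) = ∫ p : ℝ × ℝ,
        (f p.1 ^ 2 * g p.2 ^ 2 + g p.1 ^ 2 * f p.2 ^ 2
          - 2 * ((f p.1 * g p.1) * (f p.2 * g p.2))) ∂(μ.prod μ) :=
      integral_congr_ae (Filter.Eventually.of_forall fun p => by rw [hFdef]; ring)
    have t1 : ∫ p : ℝ × ℝ,
        (f p.1 ^ 2 * g p.2 ^ 2 + g p.1 ^ 2 * f p.2 ^ 2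
          - 2 * ((f p.1 * g p.1) * (f p.2 * g p.2))) ∂(μ.prod μ)
        = (∫ p : ℝ × ℝ, (f p.1 ^ 2 * g p.2 ^ 2 + g p.1 ^ 2 * f p.2 ^ 2) ∂(μ.prod μ))
          - ∫ p : ℝ × ℝ, 2 * ((f p.1 * g p.1) * (f p.2 * g p.2)) ∂(μ.prod μ) :=
      integral_sub (i1.add i2) (i3.const_mul 2)
    have t2 : ∫ p : ℝ × ℝ, (f p.1 ^ 2 * g p.2 ^ 2 + g p.1 ^ 2 * f p.2 ^ 2) ∂(μ.prod μ)
        = (∫ p : ℝ × ℝ, f p.1 ^ 2 * g p.2 ^ 2 ∂(μ.prod μ))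
          + ∫ p : ℝ × ℝ, g p.1 ^ 2 * f p.2 ^ 2 ∂(μ.prod μ) := integral_add i1 i2
    have t3 : ∫ p : ℝ × ℝ, 2 * ((f p.1 * g p.1) * (f p.2 * g p.2)) ∂(μ.prod μ)
        = 2 * ∫ p : ℝ × ℝ, (f p.1 * g p.1) * (f p.2 * g p.2) ∂(μ.prod μ) :=
      integral_const_mul 2 _
    have u1 : ∫ p : ℝ × ℝ, f p.1 ^ 2 * g p.2 ^ 2 ∂(μ.prod μ)
        = (∫ s, f s ^ 2 ∂μ) * ∫ s, g s ^ 2 ∂μ :=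
      integral_prod_mul (fun s => f s ^ 2) (fun s => g s ^ 2)
    have u2 : ∫ p : ℝ × ℝ, g p.1 ^ 2 * f p.2 ^ 2 ∂(μ.prod μ)
        = (∫ s, g s ^ 2 ∂μ) * ∫ s, f s ^ 2 ∂μ :=
      integral_prod_mul (fun s => g s ^ 2) (fun s => f s ^ 2)
    have u3 : ∫ p : ℝ × ℝ, (f p.1 * g p.1) * (f p.2 * g p.2) ∂(μ.prod μ)
        = (∫ s, f s * g s ∂μ) * ∫ s, f s * g s ∂μ :=
      integral_prod_mul (fun s => f s * g s) (fun s => f s * g s)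
    have hsq : (∫ s, f s * g s ∂μ) ^ 2 = (∫ s, f s * g s ∂μ) * ∫ s, f s * g s ∂μ := sq _
    linarith [e0, t1, t2, t3, u1, u2, u3, hsq]
  -- lower bound of the double integral on A ×ˢ B
  have keyAB : ∀ᵐ p ∂(μ.prod μ), p ∈ A ×ˢ B → Real.sin ((ψ₀ - φ₀)/2) ^ 2 ≤ F p := by
    filter_upwards [ae_fst_prod keyA, ae_snd_prod keyB] with p hpA hpB hp
    obtain ⟨hA1, hA2⟩ := hpA hp.1
    obtain ⟨hB1, hB2⟩ := hpB hp.2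
    have e : Real.sin ((ψ₀ - φ₀)/2) =
        Real.sin (ψ₀/2) * Real.cos (φ₀/2) - Real.cos (ψ₀/2) * Real.sin (φ₀/2) := by
      rw [show (ψ₀ - φ₀)/2 = ψ₀/2 - φ₀/2 by ring, Real.sin_sub]
    have h5 : Real.sin ((ψ₀ - φ₀)/2) ≤ f p.1 * g p.2 - f p.2 * g p.1 := by
      have u1 : Real.cos (φ₀/2) * Real.sin (ψ₀/2) ≤ f p.1 * g p.2 :=
        mul_le_mul hA2 hB1 hsψ0 (Real.sqrt_nonneg _)
      have u2 : f p.2 * g p.1 ≤ Real.cos (ψ₀/2) * Real.sin (φ₀/2) :=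
        mul_le_mul hB2 hA1 (Real.sqrt_nonneg _) hcψ0
      rw [e]; linarith
    have h6 : 0 ≤ Real.sin ((ψ₀ - φ₀)/2) :=
      Real.sin_nonneg_of_nonneg_of_le_pi (by linarith) (by linarith)
    calc Real.sin ((ψ₀ - φ₀)/2) ^ 2 ≤ (f p.1 * g p.2 - f p.2 * g p.1) ^ 2 :=
          pow_le_pow_left₀ h6 h5 2
      _ = F p := by rw [hFdef]
  have hABm : MeasurableSet (A ×ˢ B) := hAm.prod hBm
  have step1 : Real.sin ((ψ₀ - φ₀)/2) ^ 2 * ((volume A).toReal * (volume B).toReal) ≤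
      ∫ p, F p ∂(μ.prod μ) := by
    have hconst : ∫ _ in A ×ˢ B, Real.sin ((ψ₀ - φ₀)/2) ^ 2 ∂(μ.prod μ) =
        Real.sin ((ψ₀ - φ₀)/2) ^ 2 * ((volume A).toReal * (volume B).toReal) := by
      rw [setIntegral_const, measureReal_def, Measure.prod_prod, hμA, hμB, smul_eq_mul, ENNReal.toReal_mul]
      ring
    have h2' : ∫ _ in A ×ˢ B, Real.sin ((ψ₀ - φ₀)/2) ^ 2 ∂(μ.prod μ) ≤
        ∫ p in A ×ˢ B, F p ∂(μ.prod μ) :=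
      integral_mono_ae (integrable_const _) (hFi.restrict)
        ((ae_restrict_iff' hABm).2 keyAB)
    have h3' : ∫ p in A ×ˢ B, F p ∂(μ.prod μ) ≤ ∫ p, F p ∂(μ.prod μ) :=
      setIntegral_le_integral hFi (Filter.Eventually.of_forall fun p => sq_nonneg _)
    linarith [hconst ▸ h2']
  -- relate to the M's
  have hIf : ∫ s, f s ^ 2 ∂μ = ∫ s in Ioo 0 t, h₁ s := by
    apply integral_congr_ae
    filter_upwards [haeμ] with s hs
    rw [hfdef]; simp only
    exact Real.sq_sqrt hs.1
  have hIg : ∫ s, g s ^ 2 ∂μ = ∫ s in Ioo 0 t, h₂ s := by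
    apply integral_congr_ae
    filter_upwards [haeμ] with s hs
    rw [hgdef]; simp only
    exact Real.sq_sqrt hs.2.1
  have hIfg_nonneg : 0 ≤ ∫ s, f s * g s ∂μ :=
    integral_nonneg fun s => mul_nonneg (Real.sqrt_nonneg _) (Real.sqrt_nonneg _)
  have hM3 : (∫ s in Ioo 0 t, h₃ s) ^ 2 ≤ (∫ s, f s * g s ∂μ) ^ 2 := by
    have habs : |∫ s, h₃ s ∂μ| ≤ ∫ s, |h₃ s| ∂μ := by
      simpa [Real.norm_eq_abs] using norm_integral_le_integral_norm (μ := μ) h₃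
    have hmono : ∫ s, |h₃ s| ∂μ ≤ ∫ s, f s * g s ∂μ := by
      apply integral_mono_ae ih3.abs ifg
      filter_upwards [haeμ] with s hs
      rw [← Real.sqrt_sq_eq_abs, hfdef, hgdef]; simp only
      rw [← Real.sqrt_mul hs.1]
      exact Real.sqrt_le_sqrt hs.2.2.1
    calc (∫ s in Ioo 0 t, h₃ s) ^ 2 = |∫ s, h₃ s ∂μ| ^ 2 := (sq_abs _).symm
      _ ≤ (∫ s, f s * g s ∂μ) ^ 2 := pow_le_pow_left₀ (abs_nonneg _) (le_trans habs hmono) 2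
  -- mass identities
  set M₁ : ℝ := ∫ s in Ioo 0 t, h₁ s with hM₁def
  set M₂ : ℝ := ∫ s in Ioo 0 t, h₂ s with hM₂def
  set M₃ : ℝ := ∫ s in Ioo 0 t, h₃ s with hM₃def
  have hM1pos : 0 < M₁ := (hm t ht).1
  have hM2pos : 0 < M₂ := (hm t ht).2
  have hsum : M₁ + M₂ = t := by
    rw [hM₁def, hM₂def, ← integral_add ih1 ih2]
    have : ∫ s, (h₁ s + h₂ s) ∂μ = ∫ _, (1:ℝ) ∂μ := by
      apply integral_congr_ae
      filter_upwards [haeμ] with s hs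
      exact hs.2.2.2
    rw [this, integral_const, smul_eq_mul, mul_one, hμdef, measureReal_def, Measure.restrict_apply_univ,
      Real.volume_Ioo, ENNReal.toReal_ofReal (by linarith)]
    ring
  have hkey : Real.sin ((ψ₀ - φ₀)/2) ^ 2 * ((volume A).toReal * (volume B).toReal) ≤
      2 * (M₁ * M₂ - M₃ ^ 2) := by
    have := step1
    rw [hD, hIf, hIg] at this
    linarith [hM3]
  -- final computation
  have hMle : M₁ * M₂ ≤ t ^ 2 / 4 := by nlinarith [sq_nonneg (M₁ - M₂)]
  have hvA : 0 ≤ (volume A).toReal := ENNReal.toReal_nonneg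
  have hvB : 0 ≤ (volume B).toReal := ENNReal.toReal_nonneg
  have hs2 : 0 ≤ Real.sin ((ψ₀ - φ₀)/2) ^ 2 := sq_nonneg _
  have hdet0 : 0 ≤ M₁ * M₂ - M₃ ^ 2 := by
    have hnn : 0 ≤ Real.sin ((ψ₀ - φ₀)/2) ^ 2 * ((volume A).toReal * (volume B).toReal) :=
      mul_nonneg hs2 (mul_nonneg hvA hvB)
    linarith [hkey, hnn]
  simp only [dH]
  rw [← hM₁def, ← hM₂def, ← hM₃def, le_div_iff₀ (mul_pos hM1pos hM2pos)]
  have h4 : Real.sin ((ψ₀ - φ₀)/2) ^ 2 * ((volume A).toReal * (volume B).toReal) * (M₁ * M₂) ≤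
      (2 * (M₁ * M₂ - M₃ ^ 2)) * (t ^ 2 / 4) :=
    mul_le_mul hkey hMle (mul_pos hM1pos hM2pos).le (by linarith)
  have e1 : Real.sin ((ψ₀ - φ₀) / 2) ^ 2 * (1 / t * (volume A).toReal) *
      (1 / t * (volume B).toReal) * (M₁ * M₂) =
      Real.sin ((ψ₀ - φ₀)/2) ^ 2 * ((volume A).toReal * (volume B).toReal) * (M₁ * M₂) *
        (1 / t * (1 / t)) := by ring
  have e3 : (0:ℝ) ≤ 1 / t * (1 / t) := by positivity
  have e4 : (2 * (M₁ * M₂ - M₃ ^ 2)) * (t ^ 2 / 4) * (1 / t * (1 / t))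
      = (M₁ * M₂ - M₃ ^ 2) / 2 := by
    field_simp
    ring
  calc Real.sin ((ψ₀ - φ₀) / 2) ^ 2 * (1 / t * (volume A).toReal) *
      (1 / t * (volume B).toReal) * (M₁ * M₂)
      = Real.sin ((ψ₀ - φ₀)/2) ^ 2 * ((volume A).toReal * (volume B).toReal) * (M₁ * M₂) *
        (1 / t * (1 / t)) := e1
    _ ≤ (2 * (M₁ * M₂ - M₃ ^ 2)) * (t ^ 2 / 4) * (1 / t * (1 / t)) :=
        mul_le_mul_of_nonneg_right h4 e3
    _ = (M₁ * M₂ - M₃ ^ 2) / 2 := e4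
    _ ≤ M₁ * M₂ - M₃ ^ 2 := by linarith
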